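/- Let d_B be a special type B partition with block decomposition [T_1, ..., T_s] into blocks of types B1, B2, B3 (no B1* blocks). Define the dual sequence: a B1 block [a,a] maps to [a,a]; a B2 block [a_1, b_1^2, ..., b_k^2, a_2] maps to [a_1 − 1, b_1^2, ..., b_k^2, a_2 + 1]; a B3 block [a, b_1^2, ..., b_k^2] maps to [a − 1, b_1^2, ..., b_k^2]. Then the concatenation of these dual blocks is a special type C partition of 2n, and it equals the Springer dual partition (d_B^−)_C of d_B. -/

import Mathlib

/-- `[b₁, b₁, b₂, b₂, ...]`: each entry of `bs` doubled. -/
def pairList (bs : List ℕ) : List ℕ := bs.flatMap fun b => [b, b]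

/-- Type B1 block: `[a, a]` with `a` odd. -/
def IsB1 (T : List ℕ) : Prop := ∃ a, Odd a ∧ T = [a, a]

/-- Type B1* block: `[b, b]` with `b` even (and positive). -/
def IsB1s (T : List ℕ) : Prop := ∃ b, 0 < b ∧ Even b ∧ T = [b, b]

/-- Type B2 block: `[a₁, b₁², ..., b_k², a₂]` with `a₁, a₂` odd, all `b_j` even,
`a₁ > b₁ ≥ ... ≥ b_k > a₂` and `k ≥ 0`. -/
def IsB2 (T : List ℕ) : Prop :=
  ∃ a₁ a₂ bs, Odd a₁ ∧ Odd a₂ ∧ a₂ < a₁ ∧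
    (∀ b ∈ bs, Even b ∧ a₂ < b ∧ b < a₁) ∧ List.Pairwise (· ≥ ·) bs ∧
    T = a₁ :: (pairList bs ++ [a₂])

/-- Type B3 block: `[a, b₁², ..., b_k²]` with `a` odd, all `b_j` even (positive),
`a > b₁ ≥ ... ≥ b_k`, `k ≥ 0`. -/
def IsB3 (T : List ℕ) : Prop :=
  ∃ a bs, Odd a ∧ (∀ b ∈ bs, 0 < b ∧ Even b ∧ b < a) ∧ List.Pairwise (· ≥ ·) bs ∧
    T = a :: pairList bs

/-- A type B partition of `N`, as a weakly decreasing list of positive integers summing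
to `N` in which every even part occurs with even multiplicity. -/
def IsTypeBList (d : List ℕ) (N : ℕ) : Prop :=
  List.Pairwise (· ≥ ·) d ∧ (∀ x ∈ d, 0 < x) ∧ d.sum = N ∧
    ∀ i, Even i → Even (d.count i)

/-- `Ts` is a decomposition of `d` into consecutive blocks of types B1, B1*, B2, B3. -/
def IsBlockDecomp (d : List ℕ) (Ts : List (List ℕ)) : Prop :=
  d = Ts.flatten ∧ ∀ T ∈ Ts, IsB1 T ∨ IsB1s T ∨ IsB2 T ∨ IsB3 T

/-- The block of type B3 appears exactly once, and at the end. -/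
def B3AtEnd (Ts : List (List ℕ)) : Prop :=
  ∃ Ts' T, Ts = Ts' ++ [T] ∧ IsB3 T ∧ ∀ T' ∈ Ts', ¬ IsB3 T'


/-- The transpose (dual) partition of a list partition. -/
def transposeL (d : List ℕ) : List ℕ :=
  (List.range d.headI).map fun i => d.countP fun x => decide (i + 1 ≤ x)

/-- A type C partition of `N`, as a weakly decreasing list of positive integers summing
to `N` in which every odd part occurs with even multiplicity. -/
def IsTypeCList (d : List ℕ) (N : ℕ) : Prop :=
  List.Pairwise (· ≥ ·) d ∧ (∀ x ∈ d, 0 < x) ∧ d.sum = N ∧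
    ∀ i, Odd i → Even (d.count i)

/-- Dominance order on list partitions: all partial sums of `c` are at most those of `e`. -/
def DomL (e c : List ℕ) : Prop := ∀ k, (c.take k).sum ≤ (e.take k).sum

/-- `(e)_C`: the largest type C partition of `N` dominated by `e`. -/
def IsCCollapseL (e c : List ℕ) (N : ℕ) : Prop :=
  IsTypeCList c N ∧ DomL e c ∧ ∀ c', IsTypeCList c' N → DomL e c' → DomL c c'

/-- `d⁻`: subtract 1 from the smallest part of `d`. -/
def dminusL (d : List ℕ) : List ℕ := d.dropLast ++ [d.getLast! - 1]

/-- The Springer-dual block of a block: B1 `[a,a] ↦ [a,a]`;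
B2 `[a₁, b₁², ..., b_k², a₂] ↦ [a₁-1, b₁², ..., b_k², a₂+1]`;
B3 `[a, b₁², ..., b_k²] ↦ [a-1, b₁², ..., b_k²]` (dropping `a-1` when it is `0`). -/
def IsDualBlock (T T' : List ℕ) : Prop :=
  (∃ a, Odd a ∧ T = [a, a] ∧ T' = [a, a]) ∨
  (∃ a₁ a₂ bs, Odd a₁ ∧ Odd a₂ ∧ a₂ < a₁ ∧
    (∀ b ∈ bs, Even b ∧ a₂ < b ∧ b < a₁) ∧ List.Pairwise (· ≥ ·) bs ∧
    T = a₁ :: (pairList bs ++ [a₂]) ∧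
    T' = (a₁ - 1) :: (pairList bs ++ [a₂ + 1])) ∨
  (∃ a bs, Odd a ∧ (∀ b ∈ bs, 0 < b ∧ Even b ∧ b < a) ∧ List.Pairwise (· ≥ ·) bs ∧
    T = a :: pairList bs ∧
    T' = if a = 1 then [] else (a - 1) :: pairList bs)


/-- partial sum of first `k` entries -/
def psum (l : List ℕ) (k : ℕ) : ℕ := (l.take k).sum

/-- entries at positions `2j, 2j+1` have equal parity -/
def PairEq (l : List ℕ) : Prop := ∀ j, l.getD (2*j) 0 % 2 = l.getD (2*j+1) 0 % 2

lemma psum_zero (l : List ℕ) : psum l 0 = 0 := rfl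

lemma psum_succ (l : List ℕ) (k : ℕ) : psum l (k+1) = psum l k + l.getD k 0 := by
  unfold psum
  rw [List.take_succ, List.sum_append]
  congr 1
  rcases em (k < l.length) with h | h
  · rw [List.getElem?_eq_getElem h, List.getD_eq_getElem _ _ h]; simp
  · rw [List.getElem?_eq_none (by omega), List.getD_eq_default _ _ (by omega)]; simp

lemma psum_cons (x : ℕ) (l : List ℕ) (k : ℕ) : psum (x::l) (k+1) = x + psum l k := by
  unfold psum; simp

lemma psum_le_sum (l : List ℕ) (k : ℕ) : psum l k ≤ l.sum := by
  conv_rhs => rw [← List.take_append_drop k l]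
  rw [List.sum_append]; exact Nat.le_add_right _ _

lemma psum_eq_sum (l : List ℕ) {k : ℕ} (h : l.length ≤ k) : psum l k = l.sum := by
  unfold psum; rw [List.take_of_length_le h]

lemma psum_append_left (l₁ l₂ : List ℕ) {k : ℕ} (h : k ≤ l₁.length) :
    psum (l₁ ++ l₂) k = psum l₁ k := by
  unfold psum
  rw [List.take_append, Nat.sub_eq_zero_of_le h]
  simp

lemma psum_append_right (l₁ l₂ : List ℕ) {k : ℕ} (h : l₁.length ≤ k) :
    psum (l₁ ++ l₂) k = l₁.sum + psum l₂ (k - l₁.length) := by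
  unfold psum
  rw [List.take_append, List.sum_append, List.take_of_length_le h]

lemma psum_mono (l : List ℕ) : Monotone (psum l) := by
  intro i j hij
  induction j with
  | zero =>
    have : i = 0 := by omega
    simp [this]
  | succ j ih =>
    rcases em (i = j+1) with h|h
    · subst h; rfl
    · exact le_trans (ih (by omega)) (by rw [psum_succ]; omega)

lemma getD_anti {l : List ℕ} (hs : l.Pairwise (· ≥ ·)) {i j : ℕ} (hij : i ≤ j) :
    l.getD j 0 ≤ l.getD i 0 := by
  rcases em (j < l.length) with h | h
  · rw [List.getD_eq_getElem _ _ h, List.getD_eq_getElem _ _ (by omega)]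
    exact hs.rel_get_of_le (a := ⟨i, by omega⟩) (b := ⟨j, h⟩) hij
  · rw [List.getD_eq_default _ _ (by omega)]; exact Nat.zero_le _

lemma sum_take_even {l : List ℕ} (h : ∀ x ∈ l, Even x) (k : ℕ) : Even (psum l k) := by
  rw [Nat.even_iff, ← Nat.dvd_iff_mod_eq_zero]
  apply List.dvd_sum
  intro x hx
  exact (h x (List.mem_of_mem_take hx)).two_dvd

lemma getD_mem_or_zero (l : List ℕ) (j : ℕ) : l.getD j 0 ∈ l ∨ l.getD j 0 = 0 := by
  rcases em (j < l.length) with h | h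
  · left; rw [List.getD_eq_getElem _ _ h]; exact List.getElem_mem h
  · right; exact List.getD_eq_default _ _ (by omega)

lemma getLast_min {l : List ℕ} (hs : l.Pairwise (· ≥ ·)) (h : l ≠ []) :
    ∀ x ∈ l, l.getLast h ≤ x := by
  induction l with
  | nil => simp at h
  | cons a t ih =>
    intro x hx
    rcases List.pairwise_cons.mp hs with ⟨ha, ht⟩
    cases t with
    | nil => simp at hx; simp [hx]
    | cons b t' =>
      rw [List.getLast_cons (by simp)]
      rcases List.mem_cons.mp hx with rfl | hx'
      · exact ha _ (List.getLast_mem (by simp))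
      · exact ih ht (by simp) _ hx'

lemma mem_pairList {x : ℕ} {bs : List ℕ} : x ∈ pairList bs ↔ x ∈ bs := by
  unfold pairList
  rw [List.mem_flatMap]
  constructor
  · rintro ⟨b, hb, hx⟩; simp at hx; simpa [hx]
  · intro hx; exact ⟨x, hx, by simp⟩

lemma length_pairList (bs : List ℕ) : (pairList bs).length = 2 * bs.length := by
  unfold pairList
  induction bs with
  | nil => simp
  | cons b t ih => simp_all [List.flatMap_cons]; omega

lemma sum_pairList (bs : List ℕ) : (pairList bs).sum = 2 * bs.sum := by
  unfold pairList
  induction bs with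
  | nil => simp
  | cons b t ih => simp_all [List.flatMap_cons]; omega

lemma sorted_pairList {bs : List ℕ} (h : bs.Pairwise (· ≥ ·)) :
    (pairList bs).Pairwise (· ≥ ·) := by
  induction bs with
  | nil => simp [pairList]
  | cons b t ih =>
    rcases List.pairwise_cons.mp h with ⟨hb, ht⟩
    have : pairList (b :: t) = b :: b :: pairList t := by simp [pairList]
    rw [this]
    refine List.pairwise_cons.mpr ⟨?_, List.pairwise_cons.mpr ⟨?_, ih ht⟩⟩
    · intro y hy
      rcases List.mem_cons.mp hy with rfl | hy'
      · exact le_refl _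
      · exact hb y (mem_pairList.mp hy')
    · intro y hy; exact hb y (mem_pairList.mp hy)

lemma pairEq_of_even {l : List ℕ} (h : ∀ x ∈ l, Even x) : PairEq l := by
  intro j
  have h1 : l.getD (2*j) 0 % 2 = 0 := by
    rcases getD_mem_or_zero l (2*j) with hm | hz
    · exact Nat.even_iff.mp (h _ hm)
    · rw [hz]
  have h2 : l.getD (2*j+1) 0 % 2 = 0 := by
    rcases getD_mem_or_zero l (2*j+1) with hm | hz
    · exact Nat.even_iff.mp (h _ hm)
    · rw [hz]
  rw [h1, h2]

lemma pairEq_append {l₁ l₂ : List ℕ} (h1 : PairEq l₁) (h2 : PairEq l₂)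
    (hl : Even l₁.length) : PairEq (l₁ ++ l₂) := by
  intro j
  rcases em (2*j+1 < l₁.length) with h | h
  · rw [List.getD_append _ _ _ _ (by omega), List.getD_append _ _ _ _ h]; exact h1 j
  · rcases hl with ⟨m, hm⟩
    have hge : l₁.length ≤ 2*j := by omega
    rw [List.getD_append_right _ _ _ _ hge, List.getD_append_right _ _ _ _ (by omega)]
    have e1 : 2*j - l₁.length = 2*(j - m) := by omega
    have e2 : 2*j+1 - l₁.length = 2*(j - m)+1 := by omega
    rw [e1, e2]; exact h2 _

lemma count_eq_zero_of_even {v : ℕ} (hv : Odd v) {l : List ℕ} (h : ∀ x ∈ l, Even x) :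
    l.count v = 0 := by
  rw [List.count_eq_zero]
  intro hm
  exact (Nat.not_even_iff_odd.mpr hv) (h v hm)

lemma countP_char {c : List ℕ} (hs : c.Pairwise (· ≥ ·)) (m : ℕ) (hm : 1 ≤ m) :
    ∀ j, m ≤ c.getD j 0 ↔ j < c.countP (fun x => decide (m ≤ x)) := by
  induction c with
  | nil => intro j; simp [List.getD]; omega
  | cons a t ih =>
    rcases List.pairwise_cons.mp hs with ⟨ha, ht⟩
    intro j
    rcases em (m ≤ a) with h | h
    · rw [List.countP_cons_of_pos (by simpa)]
      cases j with
      | zero => simpa using by omega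
      | succ j =>
        rw [List.getD_cons_succ]
        rw [ih ht j]
        omega
    · have hz : t.countP (fun x => decide (m ≤ x)) = 0 := by
        rw [List.countP_eq_zero]
        intro x hx
        simp only [decide_eq_true_eq]
        have := ha x hx; omega
      rw [List.countP_cons_of_neg (by simp; omega), hz]
      simp only [Nat.not_lt_zero, iff_false, not_le]
      cases j with
      | zero => simpa using by omega
      | succ j =>
        rw [List.getD_cons_succ]
        rcases em (j < t.length) with hj | hj
        · rw [List.getD_eq_getElem _ _ hj]
          have := ha _ (List.getElem_mem hj); omega
        · rw [List.getD_eq_default _ _ (by omega)]; omega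

lemma filter_eq_take {c : List ℕ} (hs : c.Pairwise (· ≥ ·)) (t : ℕ) :
    c.filter (fun x => decide (t < x)) = c.take (c.countP (fun x => decide (t < x))) := by
  induction c with
  | nil => simp
  | cons a l ih =>
    rcases List.pairwise_cons.mp hs with ⟨ha, hl⟩
    rcases em (t < a) with h | h
    · rw [List.filter_cons_of_pos (by simpa), List.countP_cons_of_pos (by simpa)]
      rw [List.take_succ_cons, ih hl]
    · have hz : l.countP (fun x => decide (t < x)) = 0 := by
        rw [List.countP_eq_zero]
        intro x hx
        simp only [decide_eq_true_eq]
        have := ha x hx; omega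
      have hfz : l.filter (fun x => decide (t < x)) = [] := by
        rw [List.filter_eq_nil_iff]
        intro x hx
        simp only [decide_eq_true_eq]
        have := ha x hx; omega
      rw [List.filter_cons_of_neg (by simp; omega), List.countP_cons_of_neg (by simp; omega), hz, hfz]
      simp

lemma drop_even {c : List ℕ} (hs : c.Pairwise (· ≥ ·))
    (hcnt : ∀ v, Odd v → Even (c.count v)) (hev : Even c.sum) :
    ∀ k, c.getD k 0 < c.getD (k-1) 0 → Even (psum c k) := by
  intro k hk
  rcases em (c.length ≤ k) with hlen | hlen
  · rw [psum_eq_sum _ hlen]; exact hev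
  push_neg at hlen
  have hk1 : 1 ≤ k := by
    by_contra h
    have : k = 0 := by omega
    rw [this] at hk; simp at hk
  set t := c.getD k 0 with ht
  have hcp : c.countP (fun x => decide (t + 1 ≤ x)) = k := by
    have h1 := (countP_char hs (t+1) (by omega) k).not
    have h2 := (countP_char hs (t+1) (by omega) (k-1)).mp (by omega)
    simp only [not_le, not_lt] at h1
    have := h1.mp (by omega)
    omega
  have hpe : (fun x : ℕ => decide (t < x)) = (fun x => decide (t + 1 ≤ x)) := by
    funext x; simp only [decide_eq_decide]; constructor <;> intro h <;> omega
  have hft : c.filter (fun x => decide (t < x)) = c.take k := by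
    rw [filter_eq_take hs t, hpe, hcp]
  have : psum c k = (c.filter (fun x => decide (t < x))).sum := by
    rw [hft]; rfl
  rw [this, even_iff_two_dvd]
  -- multiset argument
  have hms : (c.filter (fun x => decide (t < x)) : Multiset ℕ) =
      Multiset.filter (fun x => t < x) (c : Multiset ℕ) := by
    simp [Multiset.filter_coe]
  have : (c.filter (fun x => decide (t < x))).sum =
      (Multiset.filter (fun x => t < x) (c : Multiset ℕ)).sum := by
    rw [← hms]; simp
  rw [this]
  set s := Multiset.filter (fun x => t < x) (c : Multiset ℕ) with hsdef
  conv_rhs => rw [← Multiset.map_id s]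
  rw [Finset.sum_multiset_map_count]
  apply Finset.dvd_sum
  intro a ha
  simp only [id, smul_eq_mul]
  have hcount : s.count a = if t < a then c.count a else 0 := by
    rw [hsdef, Multiset.count_filter]
    congr 1
    simp [List.count]
  rcases Nat.even_or_odd a with hae | hao
  · exact Dvd.dvd.mul_left hae.two_dvd _
  · apply Dvd.dvd.mul_right
    rw [hcount]
    split
    · exact (hcnt a hao).two_dvd
    · exact dvd_zero 2

lemma key {d c' : List ℕ} (hd : d.Pairwise (· ≥ ·)) (hc : c'.Pairwise (· ≥ ·))
    (hdrop : ∀ k, c'.getD k 0 < c'.getD (k-1) 0 → Even (psum c' k))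
    (hdom : ∀ j, psum c' j ≤ psum d j) :
    ∀ (i k m : ℕ), m = k + i + 1 → (∀ j, k ≤ j → j < m → Odd (psum d j)) →
    (psum c' m < psum d m ∨ d.getD (m-1) 0 < d.getD (m-2) 0) →
    psum c' k < psum d k := by
  intro i
  induction i with
  | zero =>
    intro k m hm hodd hend
    rcases Nat.lt_or_ge (psum c' k) (psum d k) with h | h
    · exact h
    exfalso
    have heq : psum c' k = psum d k := le_antisymm (hdom k) h
    have hOk : Odd (psum d k) := hodd k le_rfl (by omega)
    have hk1 : 1 ≤ k := by
      rcases Nat.eq_zero_or_pos k with rfl | h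
      · simpa [psum] using hOk
      · exact h
    have hnd : c'.getD (k-1) 0 = c'.getD k 0 := by
      rcases Nat.lt_or_ge (c'.getD k 0) (c'.getD (k-1) 0) with hlt | hge
      · exact absurd (hdrop k hlt) (by rw [heq]; exact (Nat.not_even_iff_odd.mpr hOk))
      · exact le_antisymm hge (getD_anti hc (by omega))
    have hs1 : psum c' ((k-1)+1) = psum c' (k-1) + c'.getD (k-1) 0 := psum_succ _ _
    have hs2 : psum d ((k-1)+1) = psum d (k-1) + d.getD (k-1) 0 := psum_succ _ _
    have hk' : (k-1)+1 = k := by omega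
    rw [hk'] at hs1 hs2
    have e1 : d.getD (k-1) 0 ≤ c'.getD (k-1) 0 := by
      have := hdom (k-1); omega
    have e2 : psum c' (k+1) = psum c' k + c'.getD k 0 := psum_succ _ _
    have e3 : psum d (k+1) = psum d k + d.getD k 0 := psum_succ _ _
    have e4 : d.getD k 0 ≤ d.getD (k-1) 0 := getD_anti hd (by omega)
    have hm1 : m = k + 1 := by omega
    subst hm1
    rcases hend with hlt | hdrop'
    · omega
    · have h1 : k + 1 - 1 = k := by omega
      have h2 : k + 1 - 2 = k - 1 := by omega
      rw [h1, h2] at hdrop'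
      have := hdom (k+1)
      omega
  | succ i ih =>
    intro k m hm hodd hend
    rcases Nat.lt_or_ge (psum c' k) (psum d k) with h | h
    · exact h
    exfalso
    have heq : psum c' k = psum d k := le_antisymm (hdom k) h
    have hOk : Odd (psum d k) := hodd k le_rfl (by omega)
    have hk1 : 1 ≤ k := by
      rcases Nat.eq_zero_or_pos k with rfl | h
      · simpa [psum] using hOk
      · exact h
    have hnd : c'.getD (k-1) 0 = c'.getD k 0 := by
      rcases Nat.lt_or_ge (c'.getD k 0) (c'.getD (k-1) 0) with hlt | hge
      · exact absurd (hdrop k hlt) (by rw [heq]; exact (Nat.not_even_iff_odd.mpr hOk))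
      · exact le_antisymm hge (getD_anti hc (by omega))
    have hs1 : psum c' ((k-1)+1) = psum c' (k-1) + c'.getD (k-1) 0 := psum_succ _ _
    have hs2 : psum d ((k-1)+1) = psum d (k-1) + d.getD (k-1) 0 := psum_succ _ _
    have hk' : (k-1)+1 = k := by omega
    rw [hk'] at hs1 hs2
    have e1 : d.getD (k-1) 0 ≤ c'.getD (k-1) 0 := by
      have := hdom (k-1); omega
    have e2 : psum c' (k+1) = psum c' k + c'.getD k 0 := psum_succ _ _
    have e3 : psum d (k+1) = psum d k + d.getD k 0 := psum_succ _ _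
    have e4 : d.getD k 0 ≤ d.getD (k-1) 0 := getD_anti hd (by omega)
    have := ih (k+1) m (by omega) (fun j hj hjm => hodd j (by omega) hjm) hend
    omega

lemma sum_map_add (l : List ℕ) (a b : ℕ → ℕ) :
    (l.map fun i => a i + b i).sum = (l.map a).sum + (l.map b).sum := by
  induction l with
  | nil => simp
  | cons x t ih => simp [ih]; omega

lemma sum_map_ite (l : List ℕ) (p : ℕ → Bool) :
    (l.map fun i => if p i then 1 else 0).sum = l.countP p := by
  induction l with
  | nil => simp
  | cons x t ih =>
    rw [List.map_cons, List.sum_cons, List.countP_cons, ih]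
    rcases em (p x = true) with h | h <;> simp [h] <;> omega

lemma countP_interval (lo hi : ℕ) : ∀ h : ℕ,
    (List.range h).countP (fun i => decide (lo ≤ i) && decide (i + 1 ≤ hi)) = min hi h - lo := by
  intro h
  induction h with
  | zero => simp
  | succ h ih =>
    rw [List.range_succ, List.countP_append, ih]
    have : (List.countP (fun i => decide (lo ≤ i) && decide (i + 1 ≤ hi)) [h]) =
        if lo ≤ h ∧ h + 1 ≤ hi then 1 else 0 := by
      rcases em (lo ≤ h ∧ h + 1 ≤ hi) with hc | hc
      · simp [hc.1, hc.2]; omega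
      · rw [if_neg hc]
        rcases em (lo ≤ h) with h1 | h1 <;> simp [h1] <;> omega
    rw [this]
    rcases em (lo ≤ h ∧ h + 1 ≤ hi) with hc | hc <;>
      [rw [if_pos hc]; rw [if_neg hc]] <;> omega

lemma headI_mem {l : List ℕ} (h : l ≠ []) : l.headI ∈ l := by
  cases l with
  | nil => simp at h
  | cons a t => simp

lemma transposeL_sorted (c : List ℕ) : (transposeL c).Pairwise (· ≥ ·) := by
  unfold transposeL
  rw [List.pairwise_map]
  apply List.Pairwise.imp_of_mem (R := (· < ·))
  · intro a b _ _ hab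
    apply List.countP_mono_left
    intro x _ hx
    simp only [decide_eq_true_eq] at hx ⊢
    omega
  · exact List.pairwise_lt_range

lemma transposeL_pos {c : List ℕ} (hs : c.Pairwise (· ≥ ·)) :
    ∀ x ∈ transposeL c, 0 < x := by
  intro x hx
  unfold transposeL at hx
  rw [List.mem_map] at hx
  obtain ⟨i, hi, rfl⟩ := hx
  rw [List.mem_range] at hi
  have hne : c ≠ [] := by
    intro h; rw [h] at hi; simp at hi
  have : c.countP (fun x => decide (i + 1 ≤ x)) ≠ 0 := by
    rw [Ne, List.countP_eq_zero]
    push_neg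
    exact ⟨c.headI, headI_mem hne, by simp; omega⟩
  omega

lemma transposeL_sum {c : List ℕ} (hs : c.Pairwise (· ≥ ·)) :
    (transposeL c).sum = c.sum := by
  unfold transposeL
  have hb : ∀ x ∈ c, x ≤ c.headI := by
    intro x hx
    cases c with
    | nil => simp at hx
    | cons a t =>
      rcases List.mem_cons.mp hx with rfl | hx'
      · simp
      · exact (List.pairwise_cons.mp hs).1 x hx'
  generalize hh : c.headI = h
  rw [hh] at hb
  clear hh hs
  induction c with
  | nil => simp
  | cons a t ih =>
    have : ∀ i : ℕ, (a :: t).countP (fun x => decide (i + 1 ≤ x)) =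
        t.countP (fun x => decide (i + 1 ≤ x)) + (if decide (i + 1 ≤ a) then 1 else 0) := by
      intro i
      rw [List.countP_cons]
    simp only [this]
    rw [sum_map_add, ih (fun x hx => hb x (List.mem_cons_of_mem _ hx))]
    rw [sum_map_ite, List.sum_cons]
    have : (List.range h).countP (fun i => decide (i + 1 ≤ a)) = a := by
      have := countP_interval 0 a h
      have ha : a ≤ h := hb a (by simp)
      have hcongr : (List.range h).countP (fun i => decide (i + 1 ≤ a)) =
          (List.range h).countP (fun i => decide (0 ≤ i) && decide (i + 1 ≤ a)) := by
        apply List.countP_congr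
        intro x _
        simp
      rw [hcongr, this]
      omega
    rw [this]
    omega

lemma transposeL_count {c : List ℕ} (hs : c.Pairwise (· ≥ ·)) {v : ℕ} (hv : 1 ≤ v) :
    (transposeL c).count v = c.getD (v-1) 0 - c.getD v 0 := by
  unfold transposeL
  rw [List.count_eq_countP, List.countP_map]
  have hchar : ∀ i, i < c.headI →
      ((c.countP fun x => decide (i + 1 ≤ x)) = v ↔
        (c.getD v 0 ≤ i ∧ i + 1 ≤ c.getD (v-1) 0)) := by
    intro i _
    have h1 := countP_char hs (i+1) (by omega) (v-1)
    have h2 := countP_char hs (i+1) (by omega) v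
    constructor
    · intro he
      rw [he] at h1 h2
      constructor
      · by_contra hcon
        push_neg at hcon
        have := h2.mp (by omega)
        omega
      · exact h1.mpr (by omega)
    · intro ⟨ha, hb⟩
      have n2 : ¬ (v < c.countP fun x => decide (i + 1 ≤ x)) := by
        rw [← h2]; omega
      have n1 : v - 1 < c.countP fun x => decide (i + 1 ≤ x) := h1.mp hb
      omega
  have : (List.range c.headI).countP ((fun a => a == v) ∘ fun i => c.countP fun x => decide (i + 1 ≤ x)) =
      (List.range c.headI).countP (fun i => decide (c.getD v 0 ≤ i) && decide (i + 1 ≤ c.getD (v-1) 0)) := by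
    apply List.countP_congr
    intro i hi
    rw [List.mem_range] at hi
    simp only [Function.comp, beq_iff_eq, Bool.and_eq_true, decide_eq_true_eq]
    exact (hchar i hi).trans (by simp)
  rw [this, countP_interval]
  have hle : c.getD (v-1) 0 ≤ c.headI := by
    have : c.headI = c.getD 0 0 := by cases c <;> simp [List.getD]
    rw [this]
    exact getD_anti hs (by omega)
  omega

structure PP (dd cc : List ℕ) : Prop where
  len : cc.length = dd.length
  sum : cc.sum = dd.sum
  evensum : Even dd.sum
  evenlen : Even dd.length
  cnt : ∀ v, Odd v → Even (cc.count v)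
  pe : PairEq cc
  srt : cc.Pairwise (· ≥ ·)
  pos : ∀ x ∈ cc, 0 < x
  upb : ∀ b, (∀ y ∈ dd, y ≤ b) → ∀ x ∈ cc, x ≤ b
  lowb : ∀ b, (∀ y ∈ dd, b ≤ y) → ∀ x ∈ cc, b ≤ x
  ps : ∀ k, psum cc k = psum dd k ∨ (psum cc k + 1 = psum dd k ∧
        ∃ m, k < m ∧ m ≤ dd.length ∧ (∀ j, k ≤ j → j < m → Odd (psum dd j)) ∧
          dd.getD (m-1) 0 < dd.getD (m-2) 0)

lemma PP_nil : PP [] [] := by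
  refine ⟨rfl, rfl, by simp, by simp, ?_, ?_, by simp, by simp, by simp, by simp, ?_⟩
  · intro v _; simp
  · intro j; rfl
  · intro k; left; rfl

lemma PP_B1 {a : ℕ} (ha : Odd a) : PP [a, a] [a, a] := by
  have hpos : 0 < a := ha.pos
  refine ⟨rfl, rfl, ?_, ⟨1, by simp⟩, ?_, ?_, ?_, ?_, ?_, ?_, ?_⟩
  · show Even (a + (a + 0)); rw [Nat.even_iff]; omega
  · intro v hv
    rcases em (v = a) with rfl | h
    · simp [List.count_cons]
    · simp [List.count_cons, h]
  · intro j
    match j with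
    | 0 => rfl
    | j+1 =>
      rw [List.getD_eq_default _ _ (by simp <;> omega), List.getD_eq_default _ _ (by simp <;> omega)]
  · simp [List.pairwise_cons]
  · intro x hx; simp at hx; omega
  · intro b hb x hx
    have := hb a (by simp)
    simp at hx; omega
  · intro b hb x hx
    have := hb a (by simp)
    simp at hx; omega
  · intro k; left; rfl

lemma PP_B2 {a₁ a₂ : ℕ} {bs : List ℕ} (h1 : Odd a₁) (h2 : Odd a₂) (h12 : a₂ < a₁)
    (hb : ∀ b ∈ bs, Even b ∧ a₂ < b ∧ b < a₁) (hbs : bs.Pairwise (· ≥ ·)) :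
    PP (a₁ :: (pairList bs ++ [a₂])) ((a₁ - 1) :: (pairList bs ++ [a₂ + 1])) := by
  set pl := pairList bs with hpl
  have hmem : ∀ x ∈ pl, Even x ∧ a₂ < x ∧ x < a₁ := fun x hx => hb x (mem_pairList.mp hx)
  have ha1 : a₁ % 2 = 1 := Nat.odd_iff.mp h1
  have ha2 : a₂ % 2 = 1 := Nat.odd_iff.mp h2
  have hgap : a₂ + 2 ≤ a₁ := by omega
  have hplsum : pl.sum = 2 * bs.sum := sum_pairList bs
  have hpllen : pl.length = 2 * bs.length := length_pairList bs
  have hccmem : ∀ x ∈ (a₁ - 1) :: (pl ++ [a₂ + 1]), Even x := by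
    intro x hx
    rcases List.mem_cons.mp hx with rfl | hx'
    · rw [Nat.even_iff]; omega
    · rcases List.mem_append.mp hx' with h | h
      · exact (hmem x h).1
      · simp at h; rw [h, Nat.even_iff]; omega
  refine ⟨by simp, by simp; omega, ?_, ?_, ?_, pairEq_of_even hccmem, ?_, ?_, ?_, ?_, ?_⟩
  · simp [hplsum]; rw [Nat.even_iff]; omega
  · simp [hpllen]; rw [Nat.even_iff]; omega
  · intro v hv; rw [count_eq_zero_of_even hv hccmem]; simp
  · rw [List.pairwise_cons]
    constructor
    · intro y hy
      rcases List.mem_append.mp hy with h | h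
      · have := (hmem y h).2.2; omega
      · simp at h; omega
    · rw [List.pairwise_append]
      refine ⟨sorted_pairList hbs, by simp, ?_⟩
      intro x hx y hy
      simp at hy; subst hy
      have := (hmem x hx).2.1; omega
  · intro x hx
    rcases List.mem_cons.mp hx with rfl | hx'
    · omega
    · rcases List.mem_append.mp hx' with h | h
      · have := (hmem x h).2.1; omega
      · simp at h; omega
  · intro b hball x hx
    have hha : a₁ ≤ b := hball a₁ (by simp)
    rcases List.mem_cons.mp hx with rfl | hx'
    · omega
    · rcases List.mem_append.mp hx' with h | h
      · have := (hmem x h).2.2; omega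
      · simp at h; omega
  · intro b hball x hx
    have hha : b ≤ a₂ := hball a₂ (by simp)
    rcases List.mem_cons.mp hx with rfl | hx'
    · omega
    · rcases List.mem_append.mp hx' with h | h
      · have := (hmem x h).2.1; omega
      · simp at h; omega
  · intro k
    match k with
    | 0 => left; rfl
    | k+1 =>
      rcases em (k ≤ pl.length) with hk | hk
      · right
        constructor
        · rw [psum_cons, psum_cons, psum_append_left _ _ hk, psum_append_left _ _ hk]
          omega
        · refine ⟨pl.length + 2, by omega, by simp <;> omega, ?_, ?_⟩
          · intro j h1j hj2
            match j, h1j with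
            | j+1, _ =>
              rw [psum_cons, psum_append_left _ _ (by omega)]
              have := sum_take_even (fun x hx => (hmem x hx).1) j
              rw [Nat.odd_iff, Nat.even_iff] at *
              omega
          · have e1 : pl.length + 2 - 1 = pl.length + 1 := by omega
            have e2 : pl.length + 2 - 2 = pl.length := by omega
            rw [e1, e2]
            have g1 : (a₁ :: (pl ++ [a₂])).getD (pl.length + 1) 0 = a₂ := by
              rw [List.getD_cons_succ, List.getD_append_right _ _ _ _ (le_refl _)]
              simp
            rw [g1]
            match hpl2 : pl, hpllen with
            | [], _ => simpa using h12
            | (x :: t), hlen2 =>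
              have hl1 : (x :: t).length = t.length + 1 := rfl
              rw [hl1, List.getD_cons_succ]
              have hlt : t.length < (x :: t).length := by simp
              rw [List.getD_append _ _ _ _ hlt, List.getD_eq_getElem _ _ hlt]
              exact (hmem _ (List.getElem_mem hlt)).2.1
      · left
        have hlen : ((a₁-1) :: (pl ++ [a₂+1])).length ≤ k + 1 := by simp; omega
        have hlen' : (a₁ :: (pl ++ [a₂])).length ≤ k + 1 := by simp; omega
        rw [psum_eq_sum _ hlen, psum_eq_sum _ hlen']
        simp
        omega

lemma PP_append {dd₁ cc₁ dd₂ cc₂ : List ℕ} (p1 : PP dd₁ cc₁) (p2 : PP dd₂ cc₂)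
    (hs1 : dd₁.Pairwise (· ≥ ·)) (hglue : ∀ x ∈ dd₁, ∀ y ∈ dd₂, y ≤ x) :
    PP (dd₁ ++ dd₂) (cc₁ ++ cc₂) := by
  have hcross : ∀ x ∈ cc₁, ∀ y ∈ cc₂, y ≤ x := by
    rcases em (dd₁ = []) with rfl | hne
    · have : cc₁ = [] := List.length_eq_zero_iff.mp (by rw [p1.len]; simp)
      subst this; simp
    · set b := dd₁.getLast hne with hb
      have hbd2 : ∀ y ∈ dd₂, y ≤ b := fun y hy => hglue b (List.getLast_mem hne) y hy
      have hbc2 : ∀ y ∈ cc₂, y ≤ b := p2.upb b hbd2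
      have hbc1 : ∀ x ∈ cc₁, b ≤ x := p1.lowb b (getLast_min hs1 hne)
      intro x hx y hy
      exact le_trans (hbc2 y hy) (hbc1 x hx)
  refine ⟨by simp [p1.len, p2.len], by simp [p1.sum, p2.sum], ?_, ?_, ?_, ?_, ?_, ?_, ?_, ?_, ?_⟩
  · rw [List.sum_append, Nat.even_add]; simp [p1.evensum, p2.evensum]
  · rw [List.length_append, Nat.even_add]; simp [p1.evenlen, p2.evenlen]
  · intro v hv
    rw [List.count_append, Nat.even_add]
    simp [p1.cnt v hv, p2.cnt v hv]
  · exact pairEq_append p1.pe p2.pe (by rw [p1.len]; exact p1.evenlen)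
  · rw [List.pairwise_append]
    exact ⟨p1.srt, p2.srt, fun x hx y hy => hcross x hx y hy⟩
  · intro x hx
    rcases List.mem_append.mp hx with h | h
    · exact p1.pos x h
    · exact p2.pos x h
  · intro b hb x hx
    rcases List.mem_append.mp hx with h | h
    · exact p1.upb b (fun y hy => hb y (List.mem_append_left _ hy)) x h
    · exact p2.upb b (fun y hy => hb y (List.mem_append_right _ hy)) x h
  · intro b hb x hx
    rcases List.mem_append.mp hx with h | h
    · exact p1.lowb b (fun y hy => hb y (List.mem_append_left _ hy)) x h
    · exact p2.lowb b (fun y hy => hb y (List.mem_append_right _ hy)) x h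
  · intro k
    rcases em (k ≤ dd₁.length) with hk | hk
    · rw [psum_append_left _ _ hk, psum_append_left _ _ (by rw [p1.len]; exact hk)]
      rcases p1.ps k with h | ⟨he, m, hm1, hm2, hodd, hdr⟩
      · left; exact h
      · right
        refine ⟨he, m, hm1, by simp; omega, ?_, ?_⟩
        · intro j hj1 hj2
          rw [psum_append_left _ _ (by omega)]
          exact hodd j hj1 hj2
        · have hm2' : 2 ≤ m := by
            by_contra hcon
            have : m = 1 := by omega
            subst this
            simp at hdr
          have hd1 : dd₁ ≠ [] := by
            intro hcon; rw [hcon] at hm2; simp at hm2; omega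
          rw [List.getD_append _ _ _ _ (by omega), List.getD_append _ _ _ _ (by omega)]
          exact hdr
    · push_neg at hk
      have hk' : dd₁.length ≤ k := by omega
      rw [psum_append_right _ _ hk', psum_append_right _ _ (by rw [p1.len]; omega)]
      rw [p1.len, p1.sum]
      rcases p2.ps (k - dd₁.length) with h | ⟨he, m, hm1, hm2, hodd, hdr⟩
      · left; rw [h]
      · right
        have hm2' : 2 ≤ m := by
          by_contra hcon
          have : m = 1 := by omega
          subst this
          simp at hdr
        refine ⟨by omega, dd₁.length + m, by omega, by simp; omega, ?_, ?_⟩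
        · intro j hj1 hj2
          rw [psum_append_right _ _ (by omega)]
          have ho := hodd (j - dd₁.length) (by omega) (by omega)
          have he1 := p1.evensum
          rw [Nat.odd_iff, Nat.even_iff] at *
          omega
        · have e1 : dd₁.length + m - 1 = dd₁.length + (m - 1) := by omega
          have e2 : dd₁.length + m - 2 = dd₁.length + (m - 2) := by omega
          rw [e1, e2, List.getD_append_right _ _ _ _ (by omega),
            List.getD_append_right _ _ _ _ (by omega)]
          have f1 : dd₁.length + (m-1) - dd₁.length = m - 1 := by omega
          have f2 : dd₁.length + (m-2) - dd₁.length = m - 2 := by omega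
          rw [f1, f2]
          exact hdr

lemma getLast!_eq {d : List ℕ} (h : d ≠ []) : d.getLast! = d.getLast h :=
  List.getLast!_of_getLast? (List.getLast?_eq_getLast h)

lemma psum_dropLast (d : List ℕ) {k : ℕ} (hk : k ≤ d.length - 1) :
    psum d.dropLast k = psum d k := by
  unfold psum
  rw [List.dropLast_eq_take, List.take_take]
  have : k ⊓ (d.length - 1) = k := by omega
  rw [this]

lemma len_dminus {d : List ℕ} (h : d ≠ []) : (dminusL d).length = d.length := by
  unfold dminusL
  rw [List.length_append, List.length_dropLast]
  have : 0 < d.length := List.length_pos_iff.mpr h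
  simp; omega

lemma psum_dminus_lt {d : List ℕ} {k : ℕ} (hk : k < d.length) :
    psum (dminusL d) k = psum d k := by
  unfold dminusL
  rw [psum_append_left _ _ (by rw [List.length_dropLast]; omega)]
  exact psum_dropLast d (by omega)

lemma sum_dminus {d : List ℕ} (h : d ≠ []) (hpos : 0 < d.getLast h) :
    (dminusL d).sum + 1 = d.sum := by
  unfold dminusL
  rw [List.sum_append, getLast!_eq h]
  conv_rhs => rw [← List.dropLast_append_getLast h]
  rw [List.sum_append]
  simp
  omega

lemma psum_dminus_ge {d : List ℕ} (h : d ≠ []) (hpos : 0 < d.getLast h) {k : ℕ}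
    (hk : d.length ≤ k) : psum (dminusL d) k + 1 = d.sum := by
  rw [psum_eq_sum _ (by rw [len_dminus h]; omega)]
  exact sum_dminus h hpos

lemma B3_facts {a : ℕ} {bs : List ℕ} (ha : Odd a)
    (hb : ∀ b ∈ bs, 0 < b ∧ Even b ∧ b < a) (hbs : bs.Pairwise (· ≥ ·)) :
    ((if a = 1 then ([] : List ℕ) else (a-1) :: pairList bs).sum + 1 = (a :: pairList bs).sum) ∧
    (∀ x ∈ (if a = 1 then ([] : List ℕ) else (a-1) :: pairList bs), Even x) ∧
    (∀ x ∈ (if a = 1 then ([] : List ℕ) else (a-1) :: pairList bs), 0 < x) ∧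
    (if a = 1 then ([] : List ℕ) else (a-1) :: pairList bs).Pairwise (· ≥ ·) ∧
    (∀ b, (∀ y ∈ (a :: pairList bs), y ≤ b) →
      ∀ x ∈ (if a = 1 then ([] : List ℕ) else (a-1) :: pairList bs), x ≤ b) ∧
    (if a = 1 then ([] : List ℕ) else (a-1) :: pairList bs).length ≤ (a :: pairList bs).length ∧
    (∀ k, 1 ≤ k →
      psum (if a = 1 then ([] : List ℕ) else (a-1) :: pairList bs) k + 1 = psum (a :: pairList bs) k ∧
      Odd (psum (a :: pairList bs) k)) := by
  have ha2 : a % 2 = 1 := Nat.odd_iff.mp ha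
  have hmem : ∀ x ∈ pairList bs, 0 < x ∧ Even x ∧ x < a :=
    fun x hx => hb x (mem_pairList.mp hx)
  rcases em (a = 1) with rfl | hne
  · have hbs0 : bs = [] := by
      cases bs with
      | nil => rfl
      | cons b t =>
        have := hb b (by simp)
        omega
    subst hbs0
    rw [if_pos rfl]
    refine ⟨by simp [pairList], by simp, by simp, by simp, by simp, by simp [pairList], ?_⟩
    intro k hk
    have h1 : psum ([] : List ℕ) k = 0 := psum_eq_sum _ (by simp)
    have h2 : psum (1 :: pairList []) k = (1 :: pairList []).sum :=
      psum_eq_sum _ (by simp [pairList]; omega)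
    rw [h1, h2]
    constructor
    · simp [pairList]
    · simp [pairList]
  · have ha3 : 3 ≤ a := by omega
    simp only [if_neg hne]
    refine ⟨by simp; omega, ?_, ?_, ?_, ?_, by simp, ?_⟩
    · intro x hx
      rcases List.mem_cons.mp hx with rfl | hx'
      · rw [Nat.even_iff]; omega
      · exact (hmem x hx').2.1
    · intro x hx
      rcases List.mem_cons.mp hx with rfl | hx'
      · omega
      · exact (hmem x hx').1
    · rw [List.pairwise_cons]
      refine ⟨?_, sorted_pairList hbs⟩
      intro y hy
      have := (hmem y hy).2.2; omega
    · intro b hball x hx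
      have hab : a ≤ b := hball a (by simp)
      rcases List.mem_cons.mp hx with rfl | hx'
      · omega
      · have := (hmem x hx').2.2; omega
    · intro k hk
      match k, hk with
      | k+1, _ =>
        rw [psum_cons, psum_cons]
        have hev := sum_take_even (fun x hx => (hmem x hx).2.1) k
        constructor
        · omega
        · rw [Nat.odd_iff, Nat.even_iff] at *
          omega

def DB12 (T T' : List ℕ) : Prop :=
  (∃ a, Odd a ∧ T = [a, a] ∧ T' = [a, a]) ∨
  (∃ a₁ a₂ bs, Odd a₁ ∧ Odd a₂ ∧ a₂ < a₁ ∧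
    (∀ b ∈ bs, Even b ∧ a₂ < b ∧ b < a₁) ∧ List.Pairwise (· ≥ ·) bs ∧
    T = a₁ :: (pairList bs ++ [a₂]) ∧ T' = (a₁ - 1) :: (pairList bs ++ [a₂ + 1]))

lemma forall₂_split {R : List ℕ → List ℕ → Prop} {l₁ : List (List ℕ)} {T : List ℕ}
    {l' : List (List ℕ)} (h : List.Forall₂ R (l₁ ++ [T]) l') :
    ∃ l₁' T', l' = l₁' ++ [T'] ∧ List.Forall₂ R l₁ l₁' ∧ R T T' := by
  induction l₁ generalizing l' with
  | nil =>
    simp at h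
    cases h with
    | cons hR htail =>
      cases htail
      exact ⟨[], _, rfl, List.Forall₂.nil, hR⟩
  | cons a l₁ ih =>
    cases h with
    | cons hR htail =>
      obtain ⟨l₁', T', rfl, hF, hRT⟩ := ih htail
      exact ⟨_ :: l₁', T', rfl, List.Forall₂.cons hR hF, hRT⟩

lemma forall₂_db12 {Ts Ts' : List (List ℕ)} (h : List.Forall₂ IsDualBlock Ts Ts')
    (hnot : ∀ T ∈ Ts, ¬ IsB3 T) : List.Forall₂ DB12 Ts Ts' := by
  induction h with
  | nil => exact List.Forall₂.nil
  | @cons T T' Ts Ts' hTT htail ih =>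
    refine List.Forall₂.cons ?_ (ih fun T hT => hnot T (List.mem_cons_of_mem _ hT))
    rcases hTT with h1 | h2 | ⟨a, bs, ha, hb, hbs, hT, _⟩
    · exact Or.inl h1
    · exact Or.inr h2
    · exact absurd ⟨a, bs, ha, hb, hbs, hT⟩ (hnot T (by simp))

lemma dual_of_B3 {T T' : List ℕ} (h3 : IsB3 T) (hdb : IsDualBlock T T') :
    ∃ a bs, Odd a ∧ (∀ b ∈ bs, 0 < b ∧ Even b ∧ b < a) ∧ List.Pairwise (· ≥ ·) bs ∧
      T = a :: pairList bs ∧ T' = if a = 1 then [] else (a - 1) :: pairList bs := by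
  obtain ⟨a0, bs0, _, _, _, hT0⟩ := h3
  have hodd : ¬ Even T.length := by
    rw [hT0]
    rw [List.length_cons, length_pairList, Nat.even_iff]
    omega
  rcases hdb with ⟨a, _, hT, _⟩ | ⟨a₁, a₂, bs, _, _, _, _, _, hT, _⟩ | hgood
  · exfalso; apply hodd; rw [hT]; exact ⟨1, rfl⟩
  · exfalso; apply hodd; rw [hT]
    simp [length_pairList]
    exact ⟨bs.length + 1, by omega⟩
  · exact hgood

lemma PP_flatten {Ts Ts' : List (List ℕ)} (h : List.Forall₂ DB12 Ts Ts')
    (hs : Ts.flatten.Pairwise (· ≥ ·)) : PP Ts.flatten Ts'.flatten := by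
  induction h with
  | nil => exact PP_nil
  | @cons T T' Ts Ts' hTT htail ih =>
    rw [List.flatten_cons] at hs ⊢
    rw [List.flatten_cons]
    rw [List.pairwise_append] at hs
    refine PP_append ?_ (ih hs.2.1) hs.1 (fun x hx y hy => hs.2.2 x hx y hy)
    rcases hTT with ⟨a, ha, rfl, rfl⟩ | ⟨a₁, a₂, bs, h1, h2, h12, hb, hbs, rfl, rfl⟩
    · exact PP_B1 ha
    · exact PP_B2 h1 h2 h12 hb hbs

/-- for a special type B partition `d` of `2n+1` with block decomposition
`Ts`, the concatenation of the dual blocks is a special type C partition of `2n`, and it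
equals the Springer dual partition `(d⁻)_C` of `d`. -/

theorem stmt10 (n : ℕ) (d : List ℕ) (hd : IsTypeBList d (2 * n + 1))
    (hspec : IsTypeBList (transposeL d) (2 * n + 1))
    (Ts Ts' : List (List ℕ))
    (hTs : IsBlockDecomp d Ts ∧ B3AtEnd Ts)
    (hdual : List.Forall₂ IsDualBlock Ts Ts') :
    IsTypeCList Ts'.flatten (2 * n) ∧
    IsTypeCList (transposeL Ts'.flatten) (2 * n) ∧
    IsCCollapseL (dminusL d) Ts'.flatten (2 * n) := by
  clear hspec
  obtain ⟨⟨hflat, hblocks⟩, Ts₀, Tl, rfl, hb3, hnot⟩ := hTs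
  obtain ⟨hsd, hdpos, hdsum, _⟩ := hd
  obtain ⟨pre', Tl', rfl, hF, hlast⟩ := forall₂_split hdual
  obtain ⟨a, bs, ha, hbb, hbs, hTl, hTl'⟩ := dual_of_B3 hb3 hlast
  subst hTl
  subst hTl'
  have hF12 : List.Forall₂ DB12 Ts₀ pre' := forall₂_db12 hF hnot
  -- notation
  have hgoalflat : (pre' ++ [if a = 1 then [] else (a - 1) :: pairList bs]).flatten =
      pre'.flatten ++ (if a = 1 then [] else (a - 1) :: pairList bs) := by simp
  rw [hgoalflat]
  set D := Ts₀.flatten with hD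
  set C := pre'.flatten with hC
  set cc : List ℕ := (if a = 1 then [] else (a - 1) :: pairList bs) with hcc
  have hdD : d = D ++ (a :: pairList bs) := by
    rw [hflat, hD]; simp
  have hlenC : C.length = D.length := by
    have := (PP_flatten hF12 (by
      have h0 : (D ++ (a :: pairList bs)).Pairwise (· ≥ ·) := by rw [← hdD]; exact hsd
      rw [List.pairwise_append] at h0
      exact h0.1)).len
    exact this
  have hsd' : (D ++ (a :: pairList bs)).Pairwise (· ≥ ·) := by rw [← hdD]; exact hsd
  rw [List.pairwise_append] at hsd'
  obtain ⟨hsD, hsdd, hglue⟩ := hsd'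
  have hPP : PP D C := PP_flatten hF12 hsD
  obtain ⟨b3sum, b3even, b3pos, b3srt, b3upb, b3len, b3ps⟩ := B3_facts ha hbb hbs
  rw [← hcc] at b3sum b3even b3pos b3srt b3upb b3len b3ps
  -- sortedness of the dual partition
  have hcross : ∀ x ∈ C, ∀ y ∈ cc, x ≥ y := by
    rcases em (D = []) with hDe | hne
    · have hCe : C = [] := List.length_eq_zero_iff.mp (by rw [hlenC, hDe]; rfl)
      rw [hCe]; simp
    · intro x hx y hy
      have h1 := b3upb (D.getLast hne) (fun z hz => hglue _ (List.getLast_mem hne) z hz) y hy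
      have h2 := hPP.lowb (D.getLast hne) (getLast_min hsD hne) x hx
      omega
  have hsc : (C ++ cc).Pairwise (· ≥ ·) := by
    rw [List.pairwise_append]
    exact ⟨hPP.srt, b3srt, hcross⟩
  have hsum2 : D.sum + (a :: pairList bs).sum = 2*n+1 := by
    rw [hdD, List.sum_append] at hdsum; exact hdsum
  have hsumc : (C ++ cc).sum = 2*n := by
    rw [List.sum_append, hPP.sum]; omega
  have G1 : IsTypeCList (C ++ cc) (2*n) := by
    refine ⟨hsc, ?_, hsumc, ?_⟩
    · intro x hx
      rcases List.mem_append.mp hx with h | h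
      exacts [hPP.pos x h, b3pos x h]
    · intro v hv
      rw [List.count_append, count_eq_zero_of_even hv b3even, Nat.add_zero]
      exact hPP.cnt v hv
  -- transpose
  have hpec : PairEq (C ++ cc) :=
    pairEq_append hPP.pe (pairEq_of_even b3even) (by rw [hlenC]; exact hPP.evenlen)
  have G2 : IsTypeCList (transposeL (C ++ cc)) (2*n) := by
    refine ⟨transposeL_sorted _, transposeL_pos hsc, ?_, ?_⟩
    · rw [transposeL_sum hsc]; exact hsumc
    · intro v hv
      obtain ⟨j, rfl⟩ := hv
      rw [transposeL_count hsc (by omega)]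
      have hpe := hpec j
      have hle := getD_anti hsc (show 2*j ≤ 2*j+1 by omega)
      have hidx : 2*j+1-1 = 2*j := by omega
      rw [hidx, Nat.even_iff]
      omega
  -- partial sum bookkeeping
  have hlend : d.length = D.length + (2*bs.length+1) := by
    rw [hdD]; simp [length_pairList]
  have hne : d ≠ [] := by rw [hdD]; simp
  have hlastpos : 0 < d.getLast hne := hdpos _ (List.getLast_mem hne)
  have hpd_le : ∀ k, k ≤ D.length → psum d k = psum D k := by
    intro k hk; rw [hdD]; exact psum_append_left _ _ hk
  have hpd_gt : ∀ k, D.length ≤ k →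
      psum d k = D.sum + psum (a :: pairList bs) (k - D.length) := by
    intro k hk; rw [hdD]; exact psum_append_right _ _ hk
  have hpc_le : ∀ k, k ≤ D.length → psum (C ++ cc) k = psum C k := by
    intro k hk; exact psum_append_left _ _ (by rw [hlenC]; exact hk)
  have hpc_gt : ∀ k, D.length ≤ k →
      psum (C ++ cc) k = C.sum + psum cc (k - D.length) := by
    intro k hk
    rw [psum_append_right _ _ (by rw [hlenC]; exact hk), hlenC]
  have hpc1 : ∀ k, D.length < k → psum (C ++ cc) k + 1 = psum d k := by
    intro k hk
    rw [hpd_gt k (by omega), hpc_gt k (by omega), hPP.sum]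
    have := (b3ps (k - D.length) (by omega)).1
    omega
  have hdomle : ∀ j, psum (dminusL d) j ≤ psum d j := by
    intro j
    rcases em (j < d.length) with h | h
    · rw [psum_dminus_lt h]
    · have h1 := psum_dminus_ge hne hlastpos (k := j) (by omega)
      have h4 : psum d j = d.sum := psum_eq_sum _ (by omega)
      rw [h4]
      omega
  have GDom : DomL (dminusL d) (C ++ cc) := by
    intro k
    show psum (C ++ cc) k ≤ psum (dminusL d) k
    rcases em (k ≤ D.length) with hk | hk
    · rw [psum_dminus_lt (by omega), hpd_le k hk, hpc_le k hk]
      rcases hPP.ps k with h | ⟨h, _⟩ <;> omega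
    · push_neg at hk
      have h1 := hpc1 k hk
      rcases em (k < d.length) with h2 | h2
      · rw [psum_dminus_lt h2]; omega
      · have h3 := psum_dminus_ge hne hlastpos (k := k) (by omega)
        have h4 : psum d k = d.sum := psum_eq_sum _ (by omega)
        omega
  have GMax : ∀ c', IsTypeCList c' (2*n) → DomL (dminusL d) c' → DomL (C ++ cc) c' := by
    rintro c' ⟨hc's, hc'pos, hc'sum, hc'cnt⟩ hdomc'
    have hdomd : ∀ j, psum c' j ≤ psum d j := fun j => le_trans (hdomc' j) (hdomle j)
    have hdropc' : ∀ k, c'.getD k 0 < c'.getD (k-1) 0 → Even (psum c' k) :=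
      drop_even hc's hc'cnt (by rw [hc'sum]; exact ⟨n, by ring⟩)
    intro k
    show psum c' k ≤ psum (C ++ cc) k
    rcases em (k ≤ D.length) with hk | hk
    · rw [hpc_le k hk]
      rcases hPP.ps k with heq | ⟨he, m, hm1, hm2, hodd, hdr⟩
      · have := hdomd k; rw [hpd_le k hk] at this; omega
      · have hkey : psum c' k < psum d k := by
          apply key hsd hc's hdropc' hdomd (m - k - 1) k m (by omega)
          · intro j hj1 hj2
            rw [hpd_le j (by omega)]
            exact hodd j hj1 hj2
          · right
            rw [hdD]
            rw [List.getD_append _ _ _ _ (by omega), List.getD_append _ _ _ _ (by omega)]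
            exact hdr
        have := hpd_le k hk
        omega
    · push_neg at hk
      rcases em (d.length ≤ k) with h2 | h2
      · have e1 : psum (C ++ cc) k = (C ++ cc).sum := by
          apply psum_eq_sum
          rw [List.length_append, hlenC]
          have := b3len
          have hpl := length_pairList bs
          simp only [List.length_cons] at this
          omega
        rw [e1, hsumc]
        calc psum c' k ≤ c'.sum := psum_le_sum _ _
        _ = 2*n := hc'sum
      · push_neg at h2
        have hkey : psum c' k < psum d k := by
          apply key hsd hc's hdropc' hdomd (d.length - k - 1) k d.length (by omega)
          · intro j hj1 hj2
            rw [hpd_gt j (by omega)]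
            have ho := (b3ps (j - D.length) (by omega)).2
            have hevD := hPP.evensum
            rw [Nat.odd_iff] at ho ⊢
            rw [Nat.even_iff] at hevD
            omega
          · left
            have h3 : psum d d.length = 2*n+1 := by
              rw [psum_eq_sum _ (le_refl _)]; exact hdsum
            have h4 : psum c' d.length ≤ c'.sum := psum_le_sum _ _
            omega
        have := hpc1 k hk
        omega
  exact ⟨G1, G2, G1, GDom, GMax⟩
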